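/- Let p,q > 1, A,B > 0, α,β ≥ 0, R > 0, and let U,V ∈ C²([0,T]) satisfy U''(t) ≥ A(t+R)^{−α}|V(t)|^p and V''(t) ≥ B(t+R)^{−β}|U(t)|^q for all t ∈ [0,T], together with U(0) ≥ 0, U'(0) > 0, V(0) ≥ 0, V'(0) > 0. Then for every t ∈ [0,T] with t ≥ (2q+3)U(0)/U'(0), U'(t) > [ 2A/(4(q+2)²)^{p+1} · (B/(q+1))^p ]^{1/(2p+2)} (t+R)^{−(α+pβ)/(2p+2)} U(t)^{(pq+2p+1)/(2p+2)}. -/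

import Mathlib

open Real Set

private lemma rpow_superadd {a b e : ℝ} (ha : 0 ≤ a) (hb : 0 ≤ b) (he : 1 ≤ e) :
    a ^ e + b ^ e ≤ (a + b) ^ e := by
  rcases eq_or_lt_of_le (by linarith : (0:ℝ) ≤ a + b) with h | h
  · have ha0 : a = 0 := by linarith
    have hb0 : b = 0 := by linarith
    simp [ha0, hb0, Real.zero_rpow (by linarith : e ≠ 0)]
  · have he1 : (0:ℝ) ≤ e - 1 := by linarith
    have h1 : a ^ e ≤ (a + b) ^ (e - 1) * a := by
      rcases eq_or_lt_of_le ha with h0 | h0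
      · rw [← h0, Real.zero_rpow (by linarith : e ≠ 0), mul_zero]
      · calc a ^ e = a ^ (e - 1) * a := by
              rw [← Real.rpow_add_one (ne_of_gt h0)]; ring_nf
          _ ≤ (a + b) ^ (e - 1) * a :=
            mul_le_mul_of_nonneg_right
              (Real.rpow_le_rpow ha (by linarith) he1) ha
    have h2 : b ^ e ≤ (a + b) ^ (e - 1) * b := by
      rcases eq_or_lt_of_le hb with h0 | h0
      · rw [← h0, Real.zero_rpow (by linarith : e ≠ 0), mul_zero]
      · calc b ^ e = b ^ (e - 1) * b := by
              rw [← Real.rpow_add_one (ne_of_gt h0)]; ring_nf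
          _ ≤ (a + b) ^ (e - 1) * b :=
            mul_le_mul_of_nonneg_right
              (Real.rpow_le_rpow hb (by linarith) he1) hb
    calc a ^ e + b ^ e ≤ (a + b) ^ (e - 1) * a + (a + b) ^ (e - 1) * b := by linarith
      _ = (a + b) ^ (e - 1) * (a + b) := by ring
      _ = (a + b) ^ e := by rw [← Real.rpow_add_one (ne_of_gt h)]; ring_nf

private lemma mono_aux {T : ℝ} {f f' : ℝ → ℝ}
    (hf : ∀ t ∈ Icc (0:ℝ) T, HasDerivWithinAt f (f' t) (Icc 0 T) t)
    (hf'0 : ∀ t ∈ Icc (0:ℝ) T, 0 ≤ f' t) :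
    ∀ t ∈ Icc (0:ℝ) T, f 0 ≤ f t := by
  intro t ht
  obtain ⟨ht0, htT⟩ := ht
  have h0 : (0:ℝ) ∈ Icc (0:ℝ) T := ⟨le_refl 0, le_trans ht0 htT⟩
  have hcont : ContinuousOn f (Icc (0:ℝ) T) := fun x hx => (hf x hx).continuousWithinAt
  have hmono : MonotoneOn f (Icc (0:ℝ) T) := by
    apply monotoneOn_of_deriv_nonneg (convex_Icc 0 T) hcont
    · intro x hx
      rw [interior_Icc] at hx
      exact ((hf x (Ioo_subset_Icc_self hx)).hasDerivAt
        (Icc_mem_nhds hx.1 hx.2)).differentiableAt.differentiableWithinAt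
    · intro x hx
      rw [interior_Icc] at hx
      have hd := (hf x (Ioo_subset_Icc_self hx)).hasDerivAt (Icc_mem_nhds hx.1 hx.2)
      rw [hd.deriv]
      exact hf'0 x (Ioo_subset_Icc_self hx)
  exact hmono h0 ⟨ht0, htT⟩ ht0

private lemma comp_aux {T : ℝ} {f g f' g' : ℝ → ℝ}
    (hf : ∀ t ∈ Icc (0:ℝ) T, HasDerivWithinAt f (f' t) (Icc 0 T) t)
    (hg : ∀ t ∈ Icc (0:ℝ) T, HasDerivWithinAt g (g' t) (Icc 0 T) t)
    (h0 : g 0 ≤ f 0) (hd : ∀ t ∈ Icc (0:ℝ) T, g' t ≤ f' t) :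
    ∀ t ∈ Icc (0:ℝ) T, g t ≤ f t := by
  intro t ht
  have := mono_aux (f := fun s => f s - g s) (f' := fun s => f' s - g' s)
    (fun s hs => (hf s hs).sub (hg s hs))
    (fun s hs => sub_nonneg.2 (hd s hs)) t ht
  linarith

private lemma hasDW_rpow {T e : ℝ} {W W' : ℝ → ℝ} (he : 1 ≤ e)
    {t : ℝ} (hW : HasDerivWithinAt W (W' t) (Icc (0:ℝ) T) t) :
    HasDerivWithinAt (fun s => W s ^ e) (e * W t ^ (e - 1) * W' t) (Icc 0 T) t := by
  have h := Real.hasDerivAt_rpow_const (x := W t) (p := e) (Or.inr he)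
  simpa [Function.comp_def] using h.comp_hasDerivWithinAt t hW

private lemma hasDW_shift {T R e : ℝ} {t : ℝ} (h : t + R ≠ 0) :
    HasDerivWithinAt (fun s => (s + R) ^ e) (e * (t + R) ^ (e - 1)) (Icc (0:ℝ) T) t := by
  have h1 := Real.hasDerivAt_rpow_const (x := t + R) (p := e) (Or.inl h)
  have h2 : HasDerivWithinAt (fun s : ℝ => s + R) 1 (Icc (0:ℝ) T) t := by
    simpa using (hasDerivWithinAt_id t (Icc (0:ℝ) T)).add_const R
  simpa [Function.comp_def] using h1.comp_hasDerivWithinAt t h2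

private lemma numeric_bound {p q A B : ℝ} (hp : 1 < p) (hq : 1 < q) (hA : 0 < A) (hB : 0 < B) :
    (2 * A / (4 * (q + 2) ^ 2) ^ (p + 1) * (B / (q + 1)) ^ p) * ((2 * q + 4) / (2 * q + 3)) ^ (p * q + 2 * p + 1)
      ≤ (2 * p + 2) * A * (B / (q + 1)) ^ p / ((q + 2) ^ p * (p * q + 2 * p + 1)) := by
  have hq2 : (0:ℝ) < q + 2 := by linarith
  have hq3 : (0:ℝ) < 2 * q + 3 := by linarith
  have hmpos : (0:ℝ) < p * q + 2 * p + 1 := by nlinarith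
  set m : ℝ := p * q + 2 * p + 1 with hmdef
  set r : ℝ := (2 * q + 4) / (2 * q + 3) with hrdef
  have hrpos : 0 < r := by positivity
  have hcBp : (0:ℝ) < (B / (q + 1)) ^ p := Real.rpow_pos_of_pos (by positivity) p
  have hlog : Real.log r ≤ 1 / (2 * q + 3) := by
    have h1 := Real.log_le_sub_one_of_pos hrpos
    have h2 : r - 1 = 1 / (2 * q + 3) := by
      rw [hrdef]; field_simp; norm_num
    linarith
  have hlognn : 0 ≤ Real.log r := by
    apply Real.log_nonneg
    rw [hrdef, le_div_iff₀ hq3]; linarith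
  have hexp1 : Real.log r * m ≤ p + 1 := by
    have h3 : Real.log r * m ≤ (1 / (2 * q + 3)) * m :=
      mul_le_mul_of_nonneg_right hlog hmpos.le
    have h4 : (1 / (2 * q + 3)) * m ≤ p + 1 := by
      rw [div_mul_eq_mul_div, div_le_iff₀ hq3, hmdef]; nlinarith
    exact le_trans h3 h4
  have hrm : r ^ m ≤ 4 ^ (p + 1) * (q + 2) ^ (p + 1) := by
    have h5 : r ^ m = Real.exp (Real.log r * m) := Real.rpow_def_of_pos hrpos m
    have h6 : Real.exp (Real.log r * m) ≤ Real.exp (p + 1) := Real.exp_le_exp.2 hexp1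
    have h7 : Real.exp (p + 1) ≤ (4 * (q + 2)) ^ (p + 1) := by
      rw [Real.rpow_def_of_pos (by linarith)]
      apply Real.exp_le_exp.2
      have h8 : (1:ℝ) ≤ Real.log (4 * (q + 2)) := by
        rw [Real.le_log_iff_exp_le (by linarith)]
        have := Real.exp_one_lt_d9
        linarith
      nlinarith
    have h9 : (4 * (q + 2) : ℝ) ^ (p + 1) = 4 ^ (p + 1) * (q + 2) ^ (p + 1) :=
      Real.mul_rpow (by norm_num) hq2.le
    linarith [h5 ▸ h6]
  have hkey : m * r ^ m ≤ (p + 1) * 4 ^ (p + 1) * (q + 2) ^ (p + 2) := by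
    have h10 : m ≤ (p + 1) * (q + 2) := by rw [hmdef]; nlinarith
    have h11 : m * r ^ m ≤ ((p + 1) * (q + 2)) * (4 ^ (p + 1) * (q + 2) ^ (p + 1)) :=
      mul_le_mul h10 hrm (Real.rpow_nonneg hrpos.le m) (by positivity)
    have h12 : (q + 2) ^ (p + 2) = (q + 2) ^ (p + 1) * (q + 2) := by
      rw [show (p + 2 : ℝ) = (p + 1) + 1 by ring, Real.rpow_add_one (ne_of_gt hq2)]
    rw [h12]; nlinarith [h11]
  have hD1 : (0:ℝ) < (4 * (q + 2) ^ 2) ^ (p + 1) := Real.rpow_pos_of_pos (by positivity) _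
  have hD2 : (0:ℝ) < (q + 2) ^ p * m := mul_pos (Real.rpow_pos_of_pos hq2 p) hmpos
  have hD1eq : (4 * (q + 2) ^ 2) ^ (p + 1) = 4 ^ (p + 1) * ((q + 2) ^ (p + 2) * (q + 2) ^ p) := by
    rw [Real.mul_rpow (by norm_num) (by positivity), ← Real.rpow_natCast (q + 2) 2,
        ← Real.rpow_mul hq2.le, show ((2:ℕ):ℝ) * (p + 1) = (p + 2) + p by push_cast; ring,
        Real.rpow_add hq2]
  rw [show (2 * A / (4 * (q + 2) ^ 2) ^ (p + 1) * (B / (q + 1)) ^ p) * r ^ m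
      = (2 * A * (B / (q + 1)) ^ p * r ^ m) / (4 * (q + 2) ^ 2) ^ (p + 1) by ring,
    show (2 * p + 2) * A * (B / (q + 1)) ^ p / ((q + 2) ^ p * m)
      = ((2 * p + 2) * A * (B / (q + 1)) ^ p) / ((q + 2) ^ p * m) by ring,
    div_le_div_iff₀ hD1 hD2, hD1eq]
  have hfin := mul_le_mul_of_nonneg_left hkey
    (show (0:ℝ) ≤ 2 * A * (B / (q + 1)) ^ p * (q + 2) ^ p by positivity)
  nlinarith [hfin]

set_option maxHeartbeats 2000000 in
/-- The key superlinear differential inequality for `U` in the blow-up lemma: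
for `t ≥ (2q+3)U(0)/U'(0)`,
`U'(t) > [2A/(4(q+2)²)^{p+1} · (B/(q+1))^p]^{1/(2p+2)} (t+R)^{-(α+pβ)/(2p+2)} U(t)^{(pq+2p+1)/(2p+2)}`. -/
theorem ODI_key_inequality
    (p q A B α β R T : ℝ) (U U' U'' V V' V'' : ℝ → ℝ)
    (hp : 1 < p) (hq : 1 < q) (hA : 0 < A) (hB : 0 < B)
    (hα : 0 ≤ α) (hβ : 0 ≤ β) (hR : 0 < R)
    (hU' : ∀ t ∈ Icc (0:ℝ) T, HasDerivWithinAt U (U' t) (Icc 0 T) t)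
    (hU'' : ∀ t ∈ Icc (0:ℝ) T, HasDerivWithinAt U' (U'' t) (Icc 0 T) t)
    (hUc : ContinuousOn U'' (Icc 0 T))
    (hV' : ∀ t ∈ Icc (0:ℝ) T, HasDerivWithinAt V (V' t) (Icc 0 T) t)
    (hV'' : ∀ t ∈ Icc (0:ℝ) T, HasDerivWithinAt V' (V'' t) (Icc 0 T) t)
    (hVc : ContinuousOn V'' (Icc 0 T))
    (hU''ineq : ∀ t ∈ Icc (0:ℝ) T, A * (t + R) ^ (-α) * |V t| ^ p ≤ U'' t)
    (hV''ineq : ∀ t ∈ Icc (0:ℝ) T, B * (t + R) ^ (-β) * |U t| ^ q ≤ V'' t)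
    (hU0 : 0 ≤ U 0) (hU'0 : 0 < U' 0) (hV0 : 0 ≤ V 0) (hV'0 : 0 < V' 0) :
    ∀ t ∈ Icc (0:ℝ) T, (2 * q + 3) * U 0 / U' 0 ≤ t →
      (2 * A / (4 * (q + 2) ^ 2) ^ (p + 1) * (B / (q + 1)) ^ p) ^ ((2 * p + 2)⁻¹)
        * (t + R) ^ (-((α + p * β) / (2 * p + 2)))
        * U t ^ ((p * q + 2 * p + 1) / (2 * p + 2)) < U' t := by
  have hq1 : (0:ℝ) < q + 1 := by linarith
  have hq2 : (0:ℝ) < q + 2 := by linarith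
  have h2p2 : (0:ℝ) < 2 * p + 2 := by linarith
  set u0 : ℝ := U 0 with hu0def
  set cB : ℝ := B / (q + 1) with hcBdef
  have hcB : 0 < cB := div_pos hB hq1
  set γ : ℝ := α + p * β with hγdef
  have hγ : 0 ≤ γ := add_nonneg hα (mul_nonneg (by linarith) hβ)
  have hmpos' : (0:ℝ) < p * q + 2 * p + 1 := by nlinarith
  set m : ℝ := p * q + 2 * p + 1 with hmdef
  have hmpos : 0 < m := hmpos'
  have hm1 : (1:ℝ) ≤ m := by rw [hmdef]; nlinarith
  set c2 : ℝ := (2 * p + 2) * A * cB ^ p / ((q + 2) ^ p * m) with hc2def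
  have hc2 : 0 < c2 := by
    apply div_pos
    · exact mul_pos (mul_pos h2p2 hA) (Real.rpow_pos_of_pos hcB p)
    · exact mul_pos (Real.rpow_pos_of_pos hq2 p) hmpos
  have hIR : ∀ s ∈ Icc (0:ℝ) T, 0 < s + R := fun s hs => by
    have := hs.1; linarith
  clear_value u0 cB γ m c2
  -- nonnegativity of second derivatives
  have hU''nn : ∀ s ∈ Icc (0:ℝ) T, 0 ≤ U'' s := fun s hs =>
    le_trans (mul_nonneg (mul_nonneg hA.le (Real.rpow_nonneg (hIR s hs).le _))
      (Real.rpow_nonneg (abs_nonneg _) _)) (hU''ineq s hs)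
  have hV''nn : ∀ s ∈ Icc (0:ℝ) T, 0 ≤ V'' s := fun s hs =>
    le_trans (mul_nonneg (mul_nonneg hB.le (Real.rpow_nonneg (hIR s hs).le _))
      (Real.rpow_nonneg (abs_nonneg _) _)) (hV''ineq s hs)
  -- first derivatives bounded below
  have hU'lb : ∀ s ∈ Icc (0:ℝ) T, U' 0 ≤ U' s := mono_aux hU'' hU''nn
  have hV'lb : ∀ s ∈ Icc (0:ℝ) T, V' 0 ≤ V' s := mono_aux hV'' hV''nn
  have hU'pos : ∀ s ∈ Icc (0:ℝ) T, 0 < U' s := fun s hs => lt_of_lt_of_le hU'0 (hU'lb s hs)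
  have hV'pos : ∀ s ∈ Icc (0:ℝ) T, 0 < V' s := fun s hs => lt_of_lt_of_le hV'0 (hV'lb s hs)
  have hUlb : ∀ s ∈ Icc (0:ℝ) T, u0 ≤ U s := by
    rw [hu0def]
    exact mono_aux hU' (fun s hs => (hU'pos s hs).le)
  have hVlb : ∀ s ∈ Icc (0:ℝ) T, V 0 ≤ V s := mono_aux hV' (fun s hs => (hV'pos s hs).le)
  have hUnn : ∀ s ∈ Icc (0:ℝ) T, 0 ≤ U s := fun s hs => le_trans hU0 (hUlb s hs)
  have hVnn : ∀ s ∈ Icc (0:ℝ) T, 0 ≤ V s := fun s hs => le_trans hV0 (hVlb s hs)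
  -- linear lower bound for U
  have hlin : ∀ s ∈ Icc (0:ℝ) T, u0 + s * U' 0 ≤ U s := by
    refine comp_aux (f := U) (f' := U') (g := fun s => u0 + s * U' 0)
      (g' := fun _ => U' 0) hU' ?_ ?_ ?_
    · intro s hs
      simpa using ((hasDerivWithinAt_id s (Icc (0:ℝ) T)).mul_const (U' 0)).const_add u0
    · simp [← hu0def]
    · exact hU'lb
  -- the auxiliary function G
  set Gf : ℝ → ℝ := fun s => (U s ^ (q + 2) - u0 ^ (q + 2)) / (q + 2) - u0 ^ (q + 1) * (U s - u0)
    with hGfdef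
  set GfD : ℝ → ℝ := fun s => ((q + 2) * U s ^ (q + 2 - 1) * U' s) / (q + 2) - u0 ^ (q + 1) * U' s
    with hGfDdef
  have hGfderiv : ∀ s ∈ Icc (0:ℝ) T, HasDerivWithinAt Gf (GfD s) (Icc 0 T) s :=
    fun s hs => (((hasDW_rpow (by linarith) (hU' s hs)).sub_const _).div_const _).sub
      (((hU' s hs).sub_const u0).const_mul _)
  have hGfDeq : ∀ s ∈ Icc (0:ℝ) T, GfD s = (U s ^ (q + 1) - u0 ^ (q + 1)) * U' s := by
    intro s hs
    rw [hGfDdef]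
    simp only [show q + 2 - 1 = q + 1 by ring]
    field_simp
  have hGf0 : Gf 0 = 0 := by
    rw [hGfdef]
    simp [← hu0def]
  have hGfDnn : ∀ s ∈ Icc (0:ℝ) T, 0 ≤ GfD s := by
    intro s hs
    rw [hGfDeq s hs]
    exact mul_nonneg (sub_nonneg.2 (Real.rpow_le_rpow hU0 (hUlb s hs) (by linarith)))
      (hU'pos s hs).le
  have hGfnn : ∀ s ∈ Icc (0:ℝ) T, 0 ≤ Gf s := by
    intro s hs
    have := mono_aux hGfderiv hGfDnn s hs
    rw [hGf0] at this
    exact this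
  clear_value Gf GfD
  -- Step F5 : first integrated inequality
  have hF5 : ∀ s ∈ Icc (0:ℝ) T,
      cB * ((s + R) ^ (-β) * (U s ^ (q + 1) - u0 ^ (q + 1))) ≤ V' s * U' s := by
    refine comp_aux (f := fun s => V' s * U' s)
      (f' := fun s => V'' s * U' s + V' s * U'' s)
      (g := fun s => cB * ((s + R) ^ (-β) * (U s ^ (q + 1) - u0 ^ (q + 1))))
      (g' := fun s => cB * ((-β * (s + R) ^ (-β - 1)) * (U s ^ (q + 1) - u0 ^ (q + 1))
        + (s + R) ^ (-β) * ((q + 1) * U s ^ (q + 1 - 1) * U' s))) ?_ ?_ ?_ ?_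
    · exact fun s hs => (hV'' s hs).mul (hU'' s hs)
    · intro s hs
      exact ((hasDW_shift (ne_of_gt (hIR s hs))).mul
        ((hasDW_rpow (by linarith) (hU' s hs)).sub_const _)).const_mul cB
    · simp only [← hu0def, sub_self, mul_zero]
      exact mul_nonneg hV'0.le hU'0.le
    · intro s hs
      have hsR := hIR s hs
      have hsub : 0 ≤ U s ^ (q + 1) - u0 ^ (q + 1) :=
        sub_nonneg.2 (Real.rpow_le_rpow hU0 (hUlb s hs) (by linarith))
      have hT1 : cB * ((-β * (s + R) ^ (-β - 1)) * (U s ^ (q + 1) - u0 ^ (q + 1))) ≤ 0 := by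
        have hx : 0 ≤ β * (s + R) ^ (-β - 1) * (U s ^ (q + 1) - u0 ^ (q + 1)) :=
          mul_nonneg (mul_nonneg hβ (Real.rpow_nonneg hsR.le _)) hsub
        have heq : cB * ((-β * (s + R) ^ (-β - 1)) * (U s ^ (q + 1) - u0 ^ (q + 1)))
            = -(cB * (β * (s + R) ^ (-β - 1) * (U s ^ (q + 1) - u0 ^ (q + 1)))) := by ring
        rw [heq]
        exact neg_nonpos.2 (mul_nonneg hcB.le hx)
      have h2eq : cB * ((s + R) ^ (-β) * ((q + 1) * U s ^ (q + 1 - 1) * U' s))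
          = (B * (s + R) ^ (-β) * |U s| ^ q) * U' s := by
        rw [show q + 1 - 1 = q by ring, abs_of_nonneg (hUnn s hs), hcBdef]
        field_simp
      have h2 : (B * (s + R) ^ (-β) * |U s| ^ q) * U' s ≤ V'' s * U' s :=
        mul_le_mul_of_nonneg_right (hV''ineq s hs) (hU'pos s hs).le
      have h2' : cB * ((s + R) ^ (-β) * ((q + 1) * U s ^ (q + 1 - 1) * U' s)) ≤ V'' s * U' s := by
        rw [h2eq]; exact h2
      have h3 : 0 ≤ V' s * U'' s := mul_nonneg (hV'pos s hs).le (hU''nn s hs)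
      rw [mul_add]
      linarith
  -- Step F6 : second integrated inequality
  have hF6 : ∀ s ∈ Icc (0:ℝ) T, cB * ((s + R) ^ (-β) * Gf s) ≤ V s * U' s ^ 2 := by
    refine comp_aux (f := fun s => V s * U' s ^ 2)
      (f' := fun s => V' s * U' s ^ 2 + V s * (2 * U' s * U'' s))
      (g := fun s => cB * ((s + R) ^ (-β) * Gf s))
      (g' := fun s => cB * ((-β * (s + R) ^ (-β - 1)) * Gf s + (s + R) ^ (-β) * GfD s))
      ?_ ?_ ?_ ?_
    · intro s hs
      have := (hV' s hs).mul ((hU'' s hs).pow 2)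
      have h2 : HasDerivWithinAt (fun s => V s * U' s ^ 2) _ _ _ := this
      simpa [pow_one, Nat.cast_ofNat] using h2
    · intro s hs
      exact ((hasDW_shift (ne_of_gt (hIR s hs))).mul (hGfderiv s hs)).const_mul cB
    · rw [hGf0]
      simp only [mul_zero, zero_add]
      exact mul_nonneg hV0 (sq_nonneg _)
    · intro s hs
      have hsR := hIR s hs
      have hT1 : cB * ((-β * (s + R) ^ (-β - 1)) * Gf s) ≤ 0 := by
        have hx : 0 ≤ β * (s + R) ^ (-β - 1) * Gf s :=
          mul_nonneg (mul_nonneg hβ (Real.rpow_nonneg hsR.le _)) (hGfnn s hs)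
        have heq : cB * ((-β * (s + R) ^ (-β - 1)) * Gf s)
            = -(cB * (β * (s + R) ^ (-β - 1) * Gf s)) := by ring
        rw [heq]
        exact neg_nonpos.2 (mul_nonneg hcB.le hx)
      have h2' : cB * ((s + R) ^ (-β) * GfD s) ≤ V' s * U' s ^ 2 := by
        have heq : cB * ((s + R) ^ (-β) * GfD s)
            = (cB * ((s + R) ^ (-β) * (U s ^ (q + 1) - u0 ^ (q + 1)))) * U' s := by
          rw [hGfDeq s hs]; ring
        rw [heq]
        calc (cB * ((s + R) ^ (-β) * (U s ^ (q + 1) - u0 ^ (q + 1)))) * U' s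
            ≤ (V' s * U' s) * U' s :=
              mul_le_mul_of_nonneg_right (hF5 s hs) (hU'pos s hs).le
          _ = V' s * U' s ^ 2 := by ring
      have h3 : 0 ≤ V s * (2 * U' s * U'' s) :=
        mul_nonneg (hVnn s hs) (mul_nonneg (mul_nonneg (by norm_num) (hU'pos s hs).le)
          (hU''nn s hs))
      rw [mul_add]
      linarith
  -- Step F6b : lower bound for Gf
  have hF6b : ∀ s ∈ Icc (0:ℝ) T, (U s - u0) ^ (q + 2) / (q + 2) ≤ Gf s := by
    refine comp_aux (f := Gf) (f' := GfD)
      (g := fun s => (U s - u0) ^ (q + 2) / (q + 2))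
      (g' := fun s => ((q + 2) * (U s - u0) ^ (q + 2 - 1) * U' s) / (q + 2))
      hGfderiv ?_ ?_ ?_
    · exact fun s hs => (hasDW_rpow (by linarith) ((hU' s hs).sub_const u0)).div_const _
    · rw [hGf0]
      simp [← hu0def, Real.zero_rpow (show q + 2 ≠ 0 by linarith)]
    · intro s hs
      have hdnn : 0 ≤ U s - u0 := sub_nonneg.2 (hUlb s hs)
      rw [hGfDeq s hs, show q + 2 - 1 = q + 1 by ring]
      have hsup := rpow_superadd hU0 hdnn (show (1:ℝ) ≤ q + 1 by linarith)
      rw [show u0 + (U s - u0) = U s by ring] at hsup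
      have h1 : (U s - u0) ^ (q + 1) ≤ U s ^ (q + 1) - u0 ^ (q + 1) := by linarith
      have heq : ((q + 2) * (U s - u0) ^ (q + 1) * U' s) / (q + 2)
          = (U s - u0) ^ (q + 1) * U' s := by field_simp
      rw [heq]
      exact mul_le_mul_of_nonneg_right h1 (hU'pos s hs).le
  -- Step F7 : the key integrated inequality for U'
  have hF7 : ∀ s ∈ Icc (0:ℝ) T,
      U' 0 ^ (2 * p + 2) + c2 * ((s + R) ^ (-γ) * (U s - u0) ^ m) ≤ U' s ^ (2 * p + 2) := by
    refine comp_aux (f := fun s => U' s ^ (2 * p + 2))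
      (f' := fun s => (2 * p + 2) * U' s ^ (2 * p + 2 - 1) * U'' s)
      (g := fun s => U' 0 ^ (2 * p + 2) + c2 * ((s + R) ^ (-γ) * (U s - u0) ^ m))
      (g' := fun s => c2 * ((-γ * (s + R) ^ (-γ - 1)) * (U s - u0) ^ m
        + (s + R) ^ (-γ) * (m * (U s - u0) ^ (m - 1) * U' s))) ?_ ?_ ?_ ?_
    · exact fun s hs => hasDW_rpow (by linarith) (hU'' s hs)
    · intro s hs
      exact (((hasDW_shift (ne_of_gt (hIR s hs))).mul
        (hasDW_rpow hm1 ((hU' s hs).sub_const u0))).const_mul c2).const_add _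
    · simp [← hu0def, Real.zero_rpow (ne_of_gt hmpos)]
    · intro s hs
      have hsR := hIR s hs
      have hU'p := hU'pos s hs
      have hdnn : 0 ≤ U s - u0 := sub_nonneg.2 (hUlb s hs)
      have hGnn := hGfnn s hs
      have hT1 : c2 * ((-γ * (s + R) ^ (-γ - 1)) * (U s - u0) ^ m) ≤ 0 := by
        have hx : 0 ≤ γ * (s + R) ^ (-γ - 1) * (U s - u0) ^ m :=
          mul_nonneg (mul_nonneg hγ (Real.rpow_nonneg hsR.le _)) (Real.rpow_nonneg hdnn _)
        have heq : c2 * ((-γ * (s + R) ^ (-γ - 1)) * (U s - u0) ^ m)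
            = -(c2 * (γ * (s + R) ^ (-γ - 1) * (U s - u0) ^ m)) := by ring
        rw [heq]
        exact neg_nonpos.2 (mul_nonneg hc2.le hx)
      -- lower bound for V s ^ p
      have hVlow : cB * ((s + R) ^ (-β) * Gf s) / U' s ^ 2 ≤ V s := by
        rw [div_le_iff₀ (by positivity)]
        exact hF6 s hs
      have hbase : 0 ≤ cB * ((s + R) ^ (-β) * Gf s) / U' s ^ 2 :=
        div_nonneg (mul_nonneg hcB.le (mul_nonneg (Real.rpow_nonneg hsR.le _) hGnn))
          (sq_nonneg _)
      have hVplow : (cB * ((s + R) ^ (-β) * Gf s) / U' s ^ 2) ^ p ≤ V s ^ p :=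
        Real.rpow_le_rpow hbase hVlow (by linarith)
      have hGp : (U s - u0) ^ ((q + 2) * p) / (q + 2) ^ p ≤ Gf s ^ p := by
        have h1 := Real.rpow_le_rpow (by positivity) (hF6b s hs)
          (le_of_lt (show (0:ℝ) < p by linarith))
        rwa [Real.div_rpow (Real.rpow_nonneg hdnn _) hq2.le,
          ← Real.rpow_mul hdnn] at h1
      have hexp : (cB * ((s + R) ^ (-β) * Gf s) / U' s ^ 2) ^ p
          = cB ^ p * (s + R) ^ (-β * p) * Gf s ^ p / U' s ^ (2 * p) := by
        rw [Real.div_rpow (mul_nonneg hcB.le (mul_nonneg (Real.rpow_nonneg hsR.le _) hGnn))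
            (by positivity),
          Real.mul_rpow hcB.le (mul_nonneg (Real.rpow_nonneg hsR.le _) hGnn),
          Real.mul_rpow (Real.rpow_nonneg hsR.le _) hGnn,
          ← Real.rpow_natCast (U' s) 2, ← Real.rpow_mul hU'p.le, ← Real.rpow_mul hsR.le]
        push_cast
        ring_nf
      have hVp2 : cB ^ p * (s + R) ^ (-β * p) * ((U s - u0) ^ ((q + 2) * p) / (q + 2) ^ p)
          / U' s ^ (2 * p) ≤ V s ^ p := by
        refine le_trans ?_ hVplow
        rw [hexp]
        have hnum : cB ^ p * (s + R) ^ (-β * p) * ((U s - u0) ^ ((q + 2) * p) / (q + 2) ^ p)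
            ≤ cB ^ p * (s + R) ^ (-β * p) * Gf s ^ p :=
          mul_le_mul_of_nonneg_left hGp
            (mul_nonneg (Real.rpow_nonneg hcB.le _) (Real.rpow_nonneg hsR.le _))
        exact (div_le_div_iff_of_pos_right (Real.rpow_pos_of_pos hU'p _)).2 hnum
      have hU''low : A * (s + R) ^ (-α) * V s ^ p ≤ U'' s := by
        have h := hU''ineq s hs
        rwa [abs_of_nonneg (hVnn s hs)] at h
      have hcoef : (0:ℝ) ≤ (2 * p + 2) * U' s ^ (2 * p + 2 - 1) :=
        mul_nonneg h2p2.le (Real.rpow_nonneg hU'p.le _)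
      have hchain : (2 * p + 2) * U' s ^ (2 * p + 2 - 1)
            * (A * (s + R) ^ (-α) * (cB ^ p * (s + R) ^ (-β * p)
              * ((U s - u0) ^ ((q + 2) * p) / (q + 2) ^ p) / U' s ^ (2 * p)))
          ≤ (2 * p + 2) * U' s ^ (2 * p + 2 - 1) * U'' s := by
        refine mul_le_mul_of_nonneg_left ?_ hcoef
        calc A * (s + R) ^ (-α) * (cB ^ p * (s + R) ^ (-β * p)
              * ((U s - u0) ^ ((q + 2) * p) / (q + 2) ^ p) / U' s ^ (2 * p))
            ≤ A * (s + R) ^ (-α) * V s ^ p :=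
              mul_le_mul_of_nonneg_left hVp2 (mul_nonneg hA.le (Real.rpow_nonneg hsR.le _))
          _ ≤ U'' s := hU''low
      have heq2 : c2 * ((s + R) ^ (-γ) * (m * (U s - u0) ^ (m - 1) * U' s))
          = (2 * p + 2) * U' s ^ (2 * p + 2 - 1)
            * (A * (s + R) ^ (-α) * (cB ^ p * (s + R) ^ (-β * p)
              * ((U s - u0) ^ ((q + 2) * p) / (q + 2) ^ p) / U' s ^ (2 * p))) := by
        rw [show -γ = -α + -β * p by rw [hγdef]; ring, Real.rpow_add hsR,
            show m - 1 = (q + 2) * p by rw [hmdef]; ring,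
            show 2 * p + 2 - 1 = 2 * p + 1 by ring]
        have hsplit : U' s ^ (2 * p + 1) = U' s ^ (2 * p) * U' s := by
          rw [Real.rpow_add hU'p, Real.rpow_one]
        rw [hsplit, hc2def]
        have hq2p : ((q:ℝ) + 2) ^ p ≠ 0 := ne_of_gt (Real.rpow_pos_of_pos hq2 _)
        have hU'2p : U' s ^ (2 * p) ≠ 0 := ne_of_gt (Real.rpow_pos_of_pos hU'p _)
        have hmne : m ≠ 0 := ne_of_gt hmpos
        field_simp
      have hfinal : c2 * ((s + R) ^ (-γ) * (m * (U s - u0) ^ (m - 1) * U' s))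
          ≤ (2 * p + 2) * U' s ^ (2 * p + 2 - 1) * U'' s := by
        rw [heq2]; exact hchain
      rw [mul_add]
      linarith
  -- conclusion
  intro t ht htt
  have htR := hIR t ht
  have hU'pt := hU'pos t ht
  have hUt : 0 ≤ U t := hUnn t ht
  have hdnn' : 0 ≤ U t - u0 := sub_nonneg.2 (hUlb t ht)
  have hXpos : 0 < 2 * A / (4 * (q + 2) ^ 2) ^ (p + 1) * cB ^ p :=
    mul_pos (div_pos (by linarith) (Real.rpow_pos_of_pos (by positivity) _))
      (Real.rpow_pos_of_pos hcB _)
  set X : ℝ := 2 * A / (4 * (q + 2) ^ 2) ^ (p + 1) * cB ^ p with hXdef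
  clear_value X
  have hne : (2 * p + 2 : ℝ) ≠ 0 := ne_of_gt h2p2
  set Y : ℝ := X ^ ((2 * p + 2)⁻¹) * (t + R) ^ (-(γ / (2 * p + 2))) * U t ^ (m / (2 * p + 2))
    with hYdef
  clear_value Y
  have hYpow : Y ^ (2 * p + 2) = X * (t + R) ^ (-γ) * U t ^ m := by
    rw [hYdef,
      Real.mul_rpow (mul_nonneg (Real.rpow_nonneg hXpos.le _) (Real.rpow_nonneg htR.le _))
        (Real.rpow_nonneg hUt _),
      Real.mul_rpow (Real.rpow_nonneg hXpos.le _) (Real.rpow_nonneg htR.le _),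
      ← Real.rpow_mul hXpos.le, ← Real.rpow_mul htR.le, ← Real.rpow_mul hUt,
      inv_mul_cancel₀ hne, Real.rpow_one,
      show -(γ / (2 * p + 2)) * (2 * p + 2) = -γ by field_simp,
      show m / (2 * p + 2) * (2 * p + 2) = m by field_simp]
  -- the quantitative comparison
  have hstep : X * U t ^ m ≤ c2 * (U t - u0) ^ m := by
    have hq3 : (0:ℝ) < 2 * q + 3 := by linarith
    have hd0 : (2 * q + 3) * u0 ≤ U t - u0 := by
      have h4 := hlin t ht
      rw [div_le_iff₀ hU'0] at htt
      linarith
    have hUtle : U t ≤ (U t - u0) * ((2 * q + 4) / (2 * q + 3)) := by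
      have h6 : U t * (2 * q + 3) ≤ (U t - u0) * (2 * q + 4) := by nlinarith [hd0, hU0]
      have h7 : (U t - u0) * ((2 * q + 4) / (2 * q + 3))
          = (U t - u0) * (2 * q + 4) / (2 * q + 3) := by ring
      rw [h7, le_div_iff₀ hq3]
      exact h6
    have hUtm : U t ^ m ≤ (U t - u0) ^ m * ((2 * q + 4) / (2 * q + 3)) ^ m := by
      rw [← Real.mul_rpow hdnn' (by positivity)]
      exact Real.rpow_le_rpow hUt hUtle hmpos.le
    have hnum : X * ((2 * q + 4) / (2 * q + 3)) ^ m ≤ c2 := by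
      rw [hXdef, hc2def, hcBdef, hmdef]
      exact numeric_bound hp hq hA hB
    calc X * U t ^ m ≤ X * ((U t - u0) ^ m * ((2 * q + 4) / (2 * q + 3)) ^ m) :=
          mul_le_mul_of_nonneg_left hUtm hXpos.le
      _ = (X * ((2 * q + 4) / (2 * q + 3)) ^ m) * (U t - u0) ^ m := by ring
      _ ≤ c2 * (U t - u0) ^ m :=
          mul_le_mul_of_nonneg_right hnum (Real.rpow_nonneg hdnn' _)
  have hmain : X * (t + R) ^ (-γ) * U t ^ m < U' t ^ (2 * p + 2) := by
    have h7 := hF7 t ht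
    have hrp := Real.rpow_pos_of_pos htR (-γ)
    have hcmp : X * (t + R) ^ (-γ) * U t ^ m ≤ c2 * ((t + R) ^ (-γ) * (U t - u0) ^ m) := by
      calc X * (t + R) ^ (-γ) * U t ^ m = (X * U t ^ m) * (t + R) ^ (-γ) := by ring
        _ ≤ (c2 * (U t - u0) ^ m) * (t + R) ^ (-γ) :=
            mul_le_mul_of_nonneg_right hstep hrp.le
        _ = c2 * ((t + R) ^ (-γ) * (U t - u0) ^ m) := by ring
    have hpos0 : 0 < U' 0 ^ (2 * p + 2) := Real.rpow_pos_of_pos hU'0 _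
    linarith
  by_contra hcon
  push_neg at hcon
  have hle := Real.rpow_le_rpow hU'pt.le hcon h2p2.le
  rw [hYpow] at hle
  linarith
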